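/- Fix ℓ⁻ ∈ ℕ. Let α, γ, δ be partitions. (i) If the Young diagram of α contains the rectangle with ℓ(δ) rows and ℓ⁻ columns (i.e. α_{ℓ(δ)} ≥ ℓ⁻, or ℓ(δ)=0, or ℓ⁻=0), then the ℓ⁻-decomposition of α + δ satisfies (α+δ)⁻ = α⁻ and (α+δ)⁺ = α⁺ + δ. (ii) If ℓ(γ) ≤ ℓ⁻ then the ℓ⁻-decomposition of α ⊔ γ' satisfies (α ⊔ γ')⁻ = α⁻ + γ and (α ⊔ γ')⁺ = α⁺. -/

import Mathlib

/-- A partition: a weakly decreasing sequence of naturals with finitely many nonzero parts.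
`f i` is the `(i+1)`-st part. -/
def IsPartition (f : ℕ → ℕ) : Prop :=
  (∀ i j, i ≤ j → f j ≤ f i) ∧ ∃ N, ∀ i, N ≤ i → f i = 0

/-- The conjugate partition: `conjFn f j` is the number of parts of `f` that are `> j`,
i.e. the length of column `j+1` of the Young diagram of `f`. -/
noncomputable def conjFn (f : ℕ → ℕ) (j : ℕ) : ℕ :=
  Set.ncard {i : ℕ | j < f i}

/-- The number of nonzero parts of `f`. -/
noncomputable def lenFn (f : ℕ → ℕ) : ℕ :=
  Set.ncard {i : ℕ | f i ≠ 0}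

/-- The size `|f|`: the number of boxes of the Young diagram of `f`. -/
noncomputable def sizeFn (f : ℕ → ℕ) : ℕ :=
  Set.ncard {p : ℕ × ℕ | p.2 < f p.1}

/-- The (extended) dominance order on sequences: all partial sums of `f` are at most
those of `g`. -/
def Dom (f g : ℕ → ℕ) : Prop :=
  ∀ k : ℕ, ∑ i ∈ Finset.range k, f i ≤ ∑ i ∈ Finset.range k, g i

/-- The negative part `σ⁻ = (σ'_1, …, σ'_l)` of the `l`-decomposition of `σ`. -/
noncomputable def minusPart (l : ℕ) (f : ℕ → ℕ) : ℕ → ℕ :=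
  fun i => if i < l then conjFn f i else 0

/-- The positive part `σ⁺ = σ - (σ⁻)'` of the `l`-decomposition of `σ`. -/
noncomputable def plusPart (l : ℕ) (f : ℕ → ℕ) : ℕ → ℕ :=
  fun i => f i - conjFn (minusPart l f) i

/-- The concatenation `(σ⁻_1, …, σ⁻_l, σ⁺_1, σ⁺_2, …)`. -/
noncomputable def concatParts (l : ℕ) (f : ℕ → ℕ) : ℕ → ℕ :=
  fun i => if i < l then minusPart l f i else plusPart l f (i - l)

/-- The `l`-twisted dominance order. -/
def TwistedDom (l : ℕ) (f g : ℕ → ℕ) : Prop :=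
  Dom (concatParts l f) (concatParts l g)

/-- `f` is `(lm, lp)`-large: `lm = 0`, or `lp = 0`, or the box `(lp, lm)` lies in the
Young diagram of `f`, i.e. `f_{lp} ≥ lm`. -/
def IsLarge (lm lp : ℕ) (f : ℕ → ℕ) : Prop :=
  lm = 0 ∨ lp = 0 ∨ lm ≤ f (lp - 1)

section Aux

open Set Finset

/-- A finite downward-closed subset of ℕ is an initial segment. -/
lemma dc_mem_iff {S : Set ℕ} (hS : S.Finite)
    (hdc : ∀ a b : ℕ, a ≤ b → b ∈ S → a ∈ S) (i : ℕ) : i ∈ S ↔ i < S.ncard := by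
  constructor
  · intro hi
    have hsub : Set.Iic i ⊆ S := fun x hx => hdc x i hx hi
    have h1 : (Set.Iic i).ncard ≤ S.ncard := Set.ncard_le_ncard hsub hS
    have h2 : (Set.Iic i).ncard = i + 1 := by
      rw [← Finset.coe_Iic, Set.ncard_coe_finset, Nat.card_Iic]
    omega
  · intro hi
    by_contra h
    have hsub : S ⊆ Set.Iio i := by
      intro x hx
      by_contra hxi
      exact h (hdc i x (le_of_not_gt hxi) hx)
    have h1 : S.ncard ≤ (Set.Iio i).ncard := Set.ncard_le_ncard hsub (Set.finite_Iio i)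
    have h2 : (Set.Iio i).ncard = i := by
      rw [← Finset.coe_range, Set.ncard_coe_finset, Finset.card_range]
    omega

lemma part_support_finite {f : ℕ → ℕ} (hf : IsPartition f) : {i : ℕ | f i ≠ 0}.Finite := by
  obtain ⟨N, hN⟩ := hf.2
  apply Set.Finite.subset (Set.finite_Iio N)
  intro k hk
  by_contra h
  exact hk (hN k (le_of_not_gt h))

lemma part_eq_zero {f : ℕ → ℕ} (hf : IsPartition f) {i : ℕ} (h : lenFn f ≤ i) : f i = 0 := by
  by_contra hne
  have := (dc_mem_iff (part_support_finite hf)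
    (fun a b hab hb => by
      simp only [Set.mem_setOf_eq] at *
      intro ha
      exact hb (Nat.le_antisymm (ha ▸ hf.1 a b hab) (Nat.zero_le _))) i).mp hne
  exact absurd this (by simpa [lenFn] using not_lt.mpr h)

lemma conj_pos_iff {f : ℕ → ℕ} (hf : IsPartition f) (i k : ℕ) :
    i < conjFn f k ↔ k < f i := by
  have hfin : {j : ℕ | k < f j}.Finite :=
    Set.Finite.subset (part_support_finite hf) (fun j hj => by
      simp only [Set.mem_setOf_eq] at *; omega)
  have hdc : ∀ a b : ℕ, a ≤ b → b ∈ {j : ℕ | k < f j} → a ∈ {j : ℕ | k < f j} :=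
    fun a b hab hb => lt_of_lt_of_le hb (hf.1 a b hab)
  exact (dc_mem_iff hfin hdc i).symm

lemma conj_conj {f : ℕ → ℕ} (hf : IsPartition f) (i : ℕ) : conjFn (conjFn f) i = f i := by
  have : {k : ℕ | i < conjFn f k} = Set.Iio (f i) := by
    ext k
    simp [conj_pos_iff hf, Set.mem_Iio]
  rw [conjFn, this, ← Finset.coe_range, Set.ncard_coe_finset, Finset.card_range]

lemma conj_minus {f : ℕ → ℕ} (hf : IsPartition f) (l i : ℕ) :
    conjFn (minusPart l f) i = min l (f i) := by
  have : {k : ℕ | i < minusPart l f k} = Set.Iio (min l (f i)) := by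
    ext k
    simp only [Set.mem_setOf_eq, minusPart, Set.mem_Iio, lt_min_iff]
    constructor
    · intro h
      by_cases hk : k < l
      · simp only [if_pos hk] at h
        exact ⟨hk, (conj_pos_iff hf i k).mp h⟩
      · simp [if_neg hk] at h
    · rintro ⟨hk, hfi⟩
      simpa [if_pos hk] using (conj_pos_iff hf i k).mpr hfi
  rw [conjFn, this, ← Finset.coe_range, Set.ncard_coe_finset, Finset.card_range]

lemma plus_eq {f : ℕ → ℕ} (hf : IsPartition f) (l i : ℕ) :
    plusPart l f i = f i - l := by
  rw [plusPart, conj_minus hf]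
  omega

lemma conj_partition {f : ℕ → ℕ} (hf : IsPartition f) : IsPartition (conjFn f) := by
  constructor
  · intro i k hik
    apply Set.ncard_le_ncard
    · intro m hm
      simp only [Set.mem_setOf_eq] at *
      omega
    · exact Set.Finite.subset (part_support_finite hf) (fun j hj => by
        simp only [Set.mem_setOf_eq] at *; omega)
  · refine ⟨f 0, fun i hi => ?_⟩
    rw [conjFn]
    convert Set.ncard_empty ℕ
    ext k
    simp only [Set.mem_setOf_eq, Set.mem_empty_iff_false, iff_false, not_lt]
    exact le_trans (hf.1 0 k (Nat.zero_le _)) hi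

lemma conj_sum {f : ℕ → ℕ} (hf : IsPartition f) {M : ℕ} (hM : f 0 ≤ M) (i : ℕ) :
    conjFn f i = ∑ m ∈ Finset.Ioc i M, Set.ncard {k : ℕ | f k = m} := by
  obtain ⟨N, hN⟩ := hf.2
  have h1 : {k : ℕ | i < f k} = ↑((Finset.range N).filter (fun k => i < f k)) := by
    ext k
    simp only [Set.mem_setOf_eq, Finset.coe_filter, Finset.mem_range]
    refine ⟨fun h => ⟨?_, h⟩, fun h => h.2⟩
    by_contra hk
    have := hN k (le_of_not_gt hk)
    omega
  have h2 : ∀ m ∈ Finset.Ioc i M, {k : ℕ | f k = m} =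
      ↑((Finset.range N).filter (fun k => f k = m)) := by
    intro m hm
    simp only [Finset.mem_Ioc] at hm
    ext k
    simp only [Set.mem_setOf_eq, Finset.coe_filter, Finset.mem_range]
    refine ⟨fun h => ⟨?_, h⟩, fun h => h.2⟩
    by_contra hk
    have := hN k (le_of_not_gt hk)
    omega
  rw [conjFn, h1, Set.ncard_coe_finset]
  rw [Finset.card_eq_sum_card_fiberwise (f := f) (t := Finset.Ioc i M)
    (fun k hk => by
      simp only [Finset.coe_filter, Set.mem_setOf_eq, Finset.mem_filter, Finset.mem_range] at hk
      simp only [Finset.coe_Ioc, Set.mem_Ioc, Finset.mem_coe, Finset.mem_Ioc]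
      exact ⟨hk.2, le_trans (hf.1 0 k (Nat.zero_le _)) hM⟩)]
  refine Finset.sum_congr rfl (fun m hm => ?_)
  rw [h2 m hm, Set.ncard_coe_finset, Finset.filter_filter]
  congr 1
  apply Finset.filter_congr
  intro k _
  simp only [Finset.mem_Ioc] at hm
  constructor
  · rintro ⟨_, h⟩; exact h
  · intro h; exact ⟨by omega, h⟩

lemma ncard_Iio' (n : ℕ) : (Set.Iio n).ncard = n := by
  rw [← Finset.coe_range, Set.ncard_coe_finset, Finset.card_range]

end Aux

/-- (i) If `α` is `(l, ℓ(δ))`-large then `(α+δ)⁻ = α⁻` and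
`(α+δ)⁺ = α⁺ + δ`.  (ii) If `ℓ(γ) ≤ l` then, for `j = α ⊔ γ'` (the join, characterised by
its multiset of nonzero parts), `j⁻ = α⁻ + γ` and `j⁺ = α⁺`. -/
theorem add_and_join_decomposition (l : ℕ) (α γ δ : ℕ → ℕ)
    (hα : IsPartition α) (hγ : IsPartition γ) (hδ : IsPartition δ) :
    (IsLarge l (lenFn δ) α →
      (∀ i, minusPart l (fun i' => α i' + δ i') i = minusPart l α i) ∧
      (∀ i, plusPart l (fun i' => α i' + δ i') i = plusPart l α i + δ i)) ∧
    (lenFn γ ≤ l →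
      ∀ j : ℕ → ℕ, IsPartition j →
        (∀ m : ℕ, 0 < m →
          Set.ncard {i : ℕ | j i = m} =
            Set.ncard {i : ℕ | α i = m} + Set.ncard {i : ℕ | conjFn γ i = m}) →
        (∀ i, minusPart l j i = minusPart l α i + γ i) ∧
        (∀ i, plusPart l j i = plusPart l α i)) := by
  constructor
  · -- Part (i)
    intro hlarge
    have hαδ : IsPartition (fun i' => α i' + δ i') := by
      refine ⟨fun i k hik => Nat.add_le_add (hα.1 i k hik) (hδ.1 i k hik), ?_⟩
      obtain ⟨N1, h1⟩ := hα.2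
      obtain ⟨N2, h2⟩ := hδ.2
      exact ⟨max N1 N2, fun i hi => by
        simp only [h1 i (le_trans (le_max_left _ _) hi),
          h2 i (le_trans (le_max_right _ _) hi)]⟩
    have hδlen : ∀ k, δ k ≠ 0 → k < lenFn δ := by
      intro k hk
      have := (dc_mem_iff (part_support_finite hδ)
        (fun a b hab hb ha => hb (Nat.eq_zero_of_le_zero (ha ▸ hδ.1 a b hab))) k).mp hk
      simpa [lenFn] using this
    have hkey : ∀ k, δ k ≠ 0 → l ≤ α k := by
      intro k hk
      have hkl := hδlen k hk
      rcases hlarge with h0 | h0 | h0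
      · omega
      · omega
      · exact le_trans h0 (hα.1 k (lenFn δ - 1) (by omega))
    constructor
    · intro i
      simp only [minusPart]
      by_cases hi : i < l
      · simp only [if_pos hi]
        have : {k : ℕ | i < α k + δ k} = {k : ℕ | i < α k} := by
          ext k
          simp only [Set.mem_setOf_eq]
          constructor
          · intro h
            by_cases hd : δ k = 0
            · omega
            · exact lt_of_lt_of_le hi (hkey k hd)
          · intro h
            omega
        simp only [conjFn, this]
      · simp [if_neg hi]
    · intro i
      rw [plus_eq hαδ, plus_eq hα]
      by_cases hd : δ i = 0
      · simp [hd]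
      · have := hkey i hd
        omega
  · -- Part (ii)
    intro hγl j hj hmult
    have hγ' := conj_partition hγ
    have hconj : ∀ i, conjFn j i = conjFn α i + γ i := by
      intro i
      set M := max (j 0) (max (α 0) (conjFn γ 0)) with hMdef
      have hJ := conj_sum hj (M := M) (le_max_left _ _) i
      have hA := conj_sum hα (M := M) (le_trans (le_max_left _ _) (le_max_right _ _)) i
      have hG := conj_sum hγ' (M := M) (le_trans (le_max_right _ _) (le_max_right _ _)) i
      rw [hJ, Finset.sum_congr rfl (fun m hm => hmult m (by
        simp only [Finset.mem_Ioc] at hm; omega)),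
        Finset.sum_add_distrib, ← hA, ← hG, conj_conj hγ]
    have hγ0 : ∀ i, l ≤ i → γ i = 0 := fun i hi => part_eq_zero hγ (le_trans hγl hi)
    have hji : ∀ i, j i = Set.ncard {k : ℕ | i < conjFn α k + γ k} := by
      intro i
      rw [← conj_conj hj i, conjFn]
      congr 1
      ext k
      simp only [Set.mem_setOf_eq, hconj k]
    constructor
    · intro i
      simp only [minusPart]
      by_cases hi : i < l
      · simp [if_pos hi, hconj i]
      · simp [if_neg hi, hγ0 i (le_of_not_gt hi)]
    · intro i
      rw [plus_eq hj, plus_eq hα]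
      by_cases h : l ≤ α i
      · have hj_eq : j i = α i := by
          rw [hji i]
          have hset : {k : ℕ | i < conjFn α k + γ k} = Set.Iio (α i) := by
            ext k
            simp only [Set.mem_setOf_eq, Set.mem_Iio]
            constructor
            · intro hk
              by_contra hge
              push_neg at hge
              rw [hγ0 k (le_trans h hge), add_zero] at hk
              have := (conj_pos_iff hα i k).mp hk
              omega
            · intro hk
              exact lt_of_lt_of_le ((conj_pos_iff hα i k).mpr hk) (Nat.le_add_right _ _)
          rw [hset, ncard_Iio']
        rw [hj_eq]
      · have hji_le : j i ≤ l := by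
          rw [hji i]
          have hsub : {k : ℕ | i < conjFn α k + γ k} ⊆ Set.Iio l := by
            intro k hk
            simp only [Set.mem_setOf_eq] at hk
            simp only [Set.mem_Iio]
            by_contra hge
            push_neg at hge
            rw [hγ0 k hge, add_zero] at hk
            have := (conj_pos_iff hα i k).mp hk
            omega
          calc Set.ncard {k : ℕ | i < conjFn α k + γ k}
              ≤ (Set.Iio l).ncard := Set.ncard_le_ncard hsub (Set.finite_Iio l)
            _ = l := ncard_Iio' l
        omega
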